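/- Fix a finite set S with at least 4 elements, a strategy τ for Ben (a function assigning a symbol of S to every finite sequence over S), and M ≥ 1. For r = (r_1,…,r_M) ∈ S^M, consider the play of the erase-repetition game of 2M moves in which Ann's j-th move is r_j and every Ben move is given by τ applied to the current sequence; call r admissible if each r_j differs from each of the last three symbols of the current sequence before Ann's j-th move (or from all its symbols if it has fewer than three terms). For a play, let h_j denote the length of the current sequence after j moves (including the erasure invoked by that move, if any), set d_1 = 1 and d_j = h_j − h_{j−1} for 2 ≤ j ≤ 2M, and define the reduced log of r as the pair consisting of the subsequence of (d_1,…,d_{2M}) obtained by deleting all entries equal to 0, together with the current sequence after 2M moves. Then the map sending an admissible r to its reduced log is injective: two distinct admissible sequences of Ann's choices have distinct reduced logs. -/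

import Mathlib

/-- The last `2*h` terms of `l` form a repetition of size `h` (`h ≥ 1`),
i.e. `l` has a suffix of the form `x₁…x_h x₁…x_h`. -/
def SuffixRep {S : Type*} (l : List S) (h : ℕ) : Prop :=
  1 ≤ h ∧ 2 * h ≤ l.length ∧
    (l.drop (l.length - 2 * h)).take h = l.drop (l.length - h)

instance {S : Type*} [DecidableEq S] (l : List S) (h : ℕ) :
    Decidable (SuffixRep l h) := by
  unfold SuffixRep; infer_instance

/-- The size of the shortest repeated suffix of `l` (`0` if there is none). -/
def minRep {S : Type*} [DecidableEq S] (l : List S) : ℕ :=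
  ((((List.range (l.length + 1)).filter fun h => decide (SuffixRep l h))).head?).getD 0

/-- Erase the second half of the shortest repeated suffix of `l`
(if `l` has no repeated suffix, `l` is left unchanged). -/
def eraseRep {S : Type*} [DecidableEq S] (l : List S) : List S :=
  l.take (l.length - minRep l)

/-- The current sequence after `j` moves of the play of the erase-repetition
game in which Ann's `(i+1)`-st move is `r i` and each move of Ben is given by
the strategy `τ` applied to the current sequence; Ann moves first and the
players alternate. -/
def annPlay {S : Type*} [DecidableEq S] (τ : List S → S) (r : ℕ → S) : ℕ → List S
  | 0 => []
  | j + 1 =>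
      let l := annPlay τ r j
      eraseRep (l ++ [if j % 2 = 0 then r (j / 2) else τ l])

/-- `r` is admissible if each of Ann's choices differs from each of the last
three symbols of the current sequence before her move (or from all its symbols
if it has fewer than three terms). -/
def Admissible {S : Type*} [DecidableEq S] (τ : List S → S) (r : ℕ → S)
    (M : ℕ) : Prop :=
  ∀ j < M, r j ∉ (annPlay τ r (2 * j)).reverse.take 3

/-- The reduced log of the `2*M`-move play determined by `τ` and Ann's choices
`r`: the sequence of differences of lengths of consecutive current sequences
(with `d 1 = 1`) with all zero entries deleted, together with the current
sequence after `2*M` moves. -/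
def reducedLog {S : Type*} [DecidableEq S] (τ : List S → S) (r : ℕ → S)
    (M : ℕ) : List ℤ × List S :=
  (((List.range (2 * M)).map fun j =>
      ((annPlay τ r (j + 1)).length : ℤ) - ((annPlay τ r j).length : ℤ)).filter
      (fun d => decide (d ≠ 0)),
    annPlay τ r (2 * M))

section Lemmas
variable {S : Type*} [DecidableEq S]

lemma minRep_cases (l : List S) : minRep l = 0 ∨ SuffixRep l (minRep l) := by
  unfold minRep
  cases hh : (((List.range (l.length + 1)).filter fun h => decide (SuffixRep l h))).head? with
  | none => left; rfl
  | some a =>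
    right
    have ha : a ∈ (List.range (l.length + 1)).filter fun h => decide (SuffixRep l h) :=
      List.mem_of_mem_head? (by simp [hh])
    simp only [List.mem_filter, decide_eq_true_eq] at ha
    simpa using ha.2

lemma minRep_le {l : List S} {h : ℕ} (H : SuffixRep l h) :
    minRep l ≤ h ∧ minRep l ≠ 0 := by
  have hmem : h ∈ (List.range (l.length + 1)).filter fun h => decide (SuffixRep l h) := by
    simp only [List.mem_filter, List.mem_range, decide_eq_true_eq]
    exact ⟨by have := H.2.1; omega, H⟩
  set F := (List.range (l.length + 1)).filter fun h => decide (SuffixRep l h) with hF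
  obtain ⟨a, t, hat⟩ := List.exists_cons_of_ne_nil (List.ne_nil_of_mem hmem)
  have hmr : minRep l = a := by unfold minRep; rw [← hF, hat]; rfl
  have hpw : F.Pairwise (· < ·) :=
    List.Pairwise.sublist List.filter_sublist List.pairwise_lt_range
  have ha : SuffixRep l a := by
    have : a ∈ F := by rw [hat]; exact List.mem_cons_self
    simp only [hF, List.mem_filter, decide_eq_true_eq] at this
    exact this.2
  constructor
  · rw [hmr]
    rcases List.mem_cons.mp (hat ▸ hmem : h ∈ a :: t) with h' | h'
    · omega
    · have := (List.pairwise_cons.mp (hat ▸ hpw)).1 h h'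
      omega
  · rw [hmr]; have := ha.1; omega

lemma minRep_le_length (l : List S) : minRep l ≤ l.length := by
  rcases minRep_cases l with h | h
  · omega
  · have := h.2.1; omega

lemma length_eraseRep (l : List S) : (eraseRep l).length = l.length - minRep l := by
  simp [eraseRep]

lemma eraseRep_recon (l : List S) :
    eraseRep l ++ (eraseRep l).drop ((eraseRep l).length - minRep l) = l := by
  rcases minRep_cases l with h0 | hs
  · simp [eraseRep, h0]
  · obtain ⟨h1, h2, h3⟩ := hs
    set m := minRep l with hm
    set n := l.length with hn
    have key : (l.take (n - m)).drop (n - m - m) = l.drop (n - m) := by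
      rw [List.drop_take]
      have : n - m - (n - m - m) = m := by omega
      rw [this]
      have : n - m - m = n - 2 * m := by omega
      rw [this, h3]
    have hlen : (eraseRep l).length = n - m := length_eraseRep l
    show eraseRep l ++ (eraseRep l).drop ((eraseRep l).length - m) = l
    rw [hlen]
    show l.take (n - m) ++ (l.take (n - m)).drop (n - m - m) = l
    rw [key, List.take_append_drop]

lemma eraseRep_inj {w w' : List S} (he : eraseRep w = eraseRep w')
    (hl : w.length = w'.length) : w = w' := by
  have h1 := eraseRep_recon w
  have h2 := eraseRep_recon w'
  have hm : minRep w = minRep w' := by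
    have a1 := length_eraseRep w
    have a2 := length_eraseRep w'
    have b1 := minRep_le_length w
    have b2 := minRep_le_length w'
    rw [he] at a1
    omega
  rw [← h1, ← h2, he, hm]

lemma getLast?_eraseRep (l : List S) (x : S) :
    (eraseRep (l ++ [x])).getLast? = some x := by
  have hrec := eraseRep_recon (l ++ [x])
  set w := l ++ [x] with hw
  set e := eraseRep w with he
  set k := e.length - minRep w with hk
  by_cases hnil : e.drop k = []
  · rw [hnil, List.append_nil] at hrec
    rw [hrec, hw, List.getLast?_concat]
  · have h1 : (e.drop k).getLast? = some x := by
      have := congrArg List.getLast? hrec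
      rwa [List.getLast?_append_of_ne_nil _ hnil, hw, List.getLast?_concat] at this
    have hk' : k < e.length := by
      by_contra hcon; push_neg at hcon
      exact hnil (List.drop_eq_nil_of_le hcon)
    rw [List.getLast?_eq_getElem?, ← h1, List.getLast?_eq_getElem?, List.getElem?_drop,
      List.length_drop]
    congr 1
    omega

lemma eraseRep_eq_of_len {l : List S} {x : S}
    (h : (eraseRep (l ++ [x])).length = l.length) : eraseRep (l ++ [x]) = l := by
  have h1 := length_eraseRep (l ++ [x])
  have h2 := minRep_le_length (l ++ [x])
  rw [List.length_append, List.length_singleton] at h1 h2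
  show (l ++ [x]).take ((l ++ [x]).length - minRep (l ++ [x])) = l
  rw [List.length_append, List.length_singleton]
  have : l.length + 1 - minRep (l ++ [x]) = l.length := by omega
  rw [this, List.take_left]

lemma d_ne_zero {l : List S} {x : S} (hx : x ∉ l.reverse.take 3) :
    (eraseRep (l ++ [x])).length ≠ l.length := by
  intro h
  have h1 := length_eraseRep (l ++ [x])
  have h2 := minRep_le_length (l ++ [x])
  rw [List.length_append, List.length_singleton] at h1 h2
  have hm : minRep (l ++ [x]) = 1 := by omega
  have hs : SuffixRep (l ++ [x]) 1 := by
    rcases minRep_cases (l ++ [x]) with h0 | hs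
    · omega
    · rwa [hm] at hs
  obtain ⟨-, hlen2, h3⟩ := hs
  rw [List.length_append, List.length_singleton] at hlen2 h3
  have hn : 1 ≤ l.length := by omega
  set n := l.length with hnn
  have := congrArg (fun t => t[0]?) h3
  simp only [List.getElem?_take, List.getElem?_drop] at this
  rw [if_pos (by omega : (0:ℕ) < 1)] at this
  have e1 : n + 1 - 2 * 1 + 0 = n - 1 := by omega
  have e2 : n + 1 - 1 + 0 = n := by omega
  rw [e1, e2] at this
  have e3 : (l ++ [x])[n]? = some x := by
    have : (l ++ [x])[l.length]? = some x := List.getElem?_concat_length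
    rwa [hnn]
  have e4 : (l ++ [x])[n-1]? = l[n-1]? := List.getElem?_append_left (by omega)
  rw [e3, e4] at this
  have hxl : x ∈ l.reverse.take 3 := by
    have h0 : (l.reverse.take 3)[0]? = some x := by
      rw [List.getElem?_take, if_pos (by omega : (0:ℕ) < 3),
        List.getElem?_reverse (by omega : 0 < l.length)]
      simpa using this
    obtain ⟨hlt, hEq⟩ := List.getElem?_eq_some_iff.mp h0
    exact hEq ▸ List.getElem_mem hlt
  exact hx hxl
end Lemmas

section Game
variable {S : Type*} [DecidableEq S]

/-- Length difference of move `i+1`. -/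
def DD (τ : List S → S) (r : ℕ → S) (i : ℕ) : ℤ :=
  ((annPlay τ r (i + 1)).length : ℤ) - ((annPlay τ r i).length : ℤ)

/-- Filtered log of the first `j` moves. -/
def Lpre (τ : List S → S) (r : ℕ → S) (j : ℕ) : List ℤ :=
  ((List.range j).map fun i =>
      ((annPlay τ r (i + 1)).length : ℤ) - ((annPlay τ r i).length : ℤ)).filter
    (fun d => decide (d ≠ 0))

variable (τ : List S → S) (r : ℕ → S)

lemma annPlay_succ (j : ℕ) :
    annPlay τ r (j + 1)
      = eraseRep (annPlay τ r j ++ [if j % 2 = 0 then r (j / 2) else τ (annPlay τ r j)]) :=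
  rfl

lemma Lpre_two_mul (M : ℕ) : Lpre τ r (2 * M) = (reducedLog τ r M).1 := rfl

lemma Lpre_succ (j : ℕ) :
    Lpre τ r (j + 1) = Lpre τ r j ++ if DD τ r j = 0 then [] else [DD τ r j] := by
  unfold Lpre
  rw [List.range_succ, List.map_append, List.filter_append]
  congr 1
  by_cases h : DD τ r j = 0
  · simp only [List.map_cons, List.map_nil, if_pos h]
    simp [show ((annPlay τ r (j+1)).length : ℤ) - ((annPlay τ r j).length : ℤ) = 0 from h]
  · simp only [List.map_cons, List.map_nil, if_neg h]
    simp only [List.filter]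
    rw [show (decide (((annPlay τ r (j+1)).length : ℤ) - ((annPlay τ r j).length : ℤ) ≠ 0)) = true
      by simpa [DD] using h]
    rfl

lemma Lpre_prefix (j c : ℕ) : Lpre τ r j <+: Lpre τ r (j + c) := by
  induction c with
  | zero => exact List.prefix_refl _
  | succ c ih =>
      rw [show j + (c + 1) = (j + c) + 1 by omega, Lpre_succ]
      exact ih.trans (List.prefix_append _ _)

lemma Lpre_prefix' {j j' : ℕ} (h : j ≤ j') : Lpre τ r j <+: Lpre τ r j' := by
  obtain ⟨c, rfl⟩ := Nat.exists_eq_add_of_le h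
  exact Lpre_prefix τ r j c

lemma DD_zero_run {a b : ℕ} (hab : a ≤ b) (h : Lpre τ r a = Lpre τ r b)
    {i : ℕ} (hi : a ≤ i) (hib : i < b) : DD τ r i = 0 := by
  by_contra hne
  have h1 := (Lpre_prefix' τ r hi).length_le
  have h2 := (Lpre_prefix' τ r (show i + 1 ≤ b by omega)).length_le
  have h3 : Lpre τ r (i + 1) = Lpre τ r i ++ [DD τ r i] := by
    rw [Lpre_succ, if_neg hne]
  rw [h3, List.length_append, List.length_singleton] at h2
  have h4 : (Lpre τ r a).length = (Lpre τ r b).length := by rw [h]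
  omega

lemma seq_succ_eq_of_DD_zero {i : ℕ} (h : DD τ r i = 0) :
    annPlay τ r (i + 1) = annPlay τ r i := by
  have hlen : (annPlay τ r (i + 1)).length = (annPlay τ r i).length := by
    unfold DD at h; omega
  rw [annPlay_succ] at hlen ⊢
  exact eraseRep_eq_of_len hlen

lemma DD_Ann_ne_zero {M : ℕ} (hr : Admissible τ r M) {k : ℕ} (hk : k < M) :
    DD τ r (2 * k) ≠ 0 := by
  have hadm := hr k hk
  have hne : (eraseRep (annPlay τ r (2 * k) ++ [r k])).length ≠ (annPlay τ r (2 * k)).length :=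
    d_ne_zero hadm
  unfold DD
  rw [annPlay_succ]
  rw [if_pos (by omega : 2 * k % 2 = 0), show 2 * k / 2 = k by omega]
  intro hcon
  apply hne
  omega

lemma Lpre_congr {r' : ℕ → S} {j : ℕ} (h : ∀ i ≤ j, annPlay τ r i = annPlay τ r' i) :
    Lpre τ r j = Lpre τ r' j := by
  unfold Lpre
  congr 1
  apply List.map_congr_left
  intro i hi
  rw [List.mem_range] at hi
  rw [h i (by omega), h (i + 1) (by omega)]

end Game

section Back
variable {S : Type*} [DecidableEq S]

lemma back_edge {τ : List S → S} {r r' : ℕ → S} {M j₀ m' : ℕ}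
    (hr' : Admissible τ r' M)
    (hne : annPlay τ r j₀ ≠ annPlay τ r' j₀)
    (hj₀odd : j₀ % 2 = 1)
    (hD : DD τ r (j₀ - 1) ≠ 0) (hD' : DD τ r' (j₀ - 1) ≠ 0)
    (hLpre₀ : Lpre τ r (j₀ - 1) = Lpre τ r' (j₀ - 1))
    (hm' : j₀ < m') (hm'2M : m' ≤ 2 * M)
    (hseq : annPlay τ r j₀ = annPlay τ r' m')
    (hLpre : Lpre τ r j₀ = Lpre τ r' m') : False := by
  obtain ⟨a, rfl⟩ : ∃ a, j₀ = a + 1 := ⟨j₀ - 1, by omega⟩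
  simp only [Nat.add_sub_cancel] at hD hD' hLpre₀
  have hL1 : Lpre τ r (a + 1) = Lpre τ r a ++ [DD τ r a] := by
    rw [Lpre_succ, if_neg hD]
  have hL2 : Lpre τ r' (a + 1) = Lpre τ r' a ++ [DD τ r' a] := by
    rw [Lpre_succ, if_neg hD']
  have hlen : (Lpre τ r' (a + 1)).length = (Lpre τ r' m').length := by
    rw [hL2, ← hLpre, hL1, hLpre₀]; simp
  have heq : Lpre τ r' (a + 1) = Lpre τ r' m' :=
    (Lpre_prefix' τ r' (by omega)).eq_of_length hlen
  have hrun : ∀ i, a + 1 ≤ i → i < m' → DD τ r' i = 0 :=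
    fun i h1 h2 => DD_zero_run τ r' (by omega) heq h1 h2
  by_cases hc : a + 3 ≤ m'
  · have hz := hrun (a + 2) (by omega) (by omega)
    have hkM : (a + 2) / 2 < M := by omega
    have := DD_Ann_ne_zero τ r' hr' hkM
    rw [show 2 * ((a + 2) / 2) = a + 2 by omega] at this
    exact this hz
  · have hm2 : m' = a + 2 := by omega
    have hz := hrun (a + 1) (by omega) (by omega)
    have := seq_succ_eq_of_DD_zero τ r' hz
    apply hne
    rw [hseq, hm2, this]

lemma back {τ : List S → S} {r r' : ℕ → S} {M j₀ : ℕ}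
    (hr : Admissible τ r M) (hr' : Admissible τ r' M)
    (hne : annPlay τ r j₀ ≠ annPlay τ r' j₀)
    (hmin : ∀ i < j₀, annPlay τ r i = annPlay τ r' i)
    (hj₀odd : j₀ % 2 = 1) (hj₀2M : j₀ ≤ 2 * M) :
    ∀ n m m', m + m' ≤ n → m ≤ 2 * M → m' ≤ 2 * M → j₀ ≤ m → j₀ ≤ m' →
      annPlay τ r m = annPlay τ r' m' → Lpre τ r m = Lpre τ r' m' → False := by
  have hkM : (j₀ - 1) / 2 < M := by omega
  have hk : j₀ - 1 = 2 * ((j₀ - 1) / 2) := by omega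
  have hD : DD τ r (j₀ - 1) ≠ 0 := by rw [hk]; exact DD_Ann_ne_zero τ r hr hkM
  have hD' : DD τ r' (j₀ - 1) ≠ 0 := by rw [hk]; exact DD_Ann_ne_zero τ r' hr' hkM
  have hLpre₀ : Lpre τ r (j₀ - 1) = Lpre τ r' (j₀ - 1) :=
    Lpre_congr τ r (fun i hi => hmin i (by omega))
  intro n
  induction n with
  | zero => intro m m' hsum _ _ hjm hjm' _ _; omega
  | succ n ih =>
    intro m m' hsum hm2M hm'2M hjm hjm' hseq hLpre
    rcases eq_or_lt_of_le hjm with hm | hm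
    · subst hm
      rcases eq_or_lt_of_le hjm' with hm' | hm'
      · subst hm'; exact hne hseq
      · exact back_edge hr' hne hj₀odd hD hD' hLpre₀ hm' hm'2M hseq hLpre
    · rcases eq_or_lt_of_le hjm' with hm' | hm'
      · subst hm'
        exact back_edge hr (fun h => hne h.symm) hj₀odd hD' hD hLpre₀.symm hm hm2M
          hseq.symm hLpre.symm
      · obtain ⟨a, rfl⟩ : ∃ a, m = a + 1 := ⟨m - 1, by omega⟩
        obtain ⟨b, rfl⟩ : ∃ b, m' = b + 1 := ⟨m' - 1, by omega⟩
        by_cases hza : DD τ r a = 0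
        · have e1 := seq_succ_eq_of_DD_zero τ r hza
          have e2 : Lpre τ r (a + 1) = Lpre τ r a := by
            rw [Lpre_succ, if_pos hza, List.append_nil]
          exact ih a (b + 1) (by omega) (by omega) (by omega) (by omega) (by omega)
            (by rw [← e1]; exact hseq) (by rw [← e2]; exact hLpre)
        · by_cases hzb : DD τ r' b = 0
          · have e1 := seq_succ_eq_of_DD_zero τ r' hzb
            have e2 : Lpre τ r' (b + 1) = Lpre τ r' b := by
              rw [Lpre_succ, if_pos hzb, List.append_nil]
            exact ih (a + 1) b (by omega) (by omega) (by omega) (by omega) (by omega)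
              (by rw [← e1]; exact hseq) (by rw [← e2]; exact hLpre)
          · have e1 : Lpre τ r (a + 1) = Lpre τ r a ++ [DD τ r a] := by
              rw [Lpre_succ, if_neg hza]
            have e2 : Lpre τ r' (b + 1) = Lpre τ r' b ++ [DD τ r' b] := by
              rw [Lpre_succ, if_neg hzb]
            rw [e1, e2] at hLpre
            obtain ⟨hL, hdval⟩ := List.append_inj' hLpre (by simp)
            have hd : DD τ r a = DD τ r' b := by simpa using hdval
            have hlenab : (annPlay τ r a).length = (annPlay τ r' b).length := by
              have h1 := congrArg List.length hseq
              unfold DD at hd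
              omega
            rw [annPlay_succ, annPlay_succ] at hseq
            have hw := eraseRep_inj hseq (by simp [hlenab])
            have hseq' : annPlay τ r a = annPlay τ r' b :=
              (List.append_inj' hw (by simp)).1
            exact ih a b (by omega) (by omega) (by omega) (by omega) (by omega) hseq' hL

end Back

/-- Over a finite symbol set of size at least 4, for a fixed strategy `τ` of
Ben and `M ≥ 1`, the map sending an admissible sequence of Ann's choices to its
reduced log is injective. -/
theorem reducedLog_injective {S : Type*} [Fintype S] [DecidableEq S]
    (hS : 4 ≤ Fintype.card S) (τ : List S → S) (M : ℕ) (hM : 1 ≤ M)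
    (r r' : ℕ → S) (hr : Admissible τ r M) (hr' : Admissible τ r' M)
    (hlog : reducedLog τ r M = reducedLog τ r' M) :
    ∀ j < M, r j = r' j := by
  have hfin : annPlay τ r (2 * M) = annPlay τ r' (2 * M) := congrArg Prod.snd hlog
  have hLfull : Lpre τ r (2 * M) = Lpre τ r' (2 * M) := congrArg Prod.fst hlog
  have hall : ∀ j, j ≤ 2 * M → annPlay τ r j = annPlay τ r' j := by
    by_contra hcon
    push_neg at hcon
    obtain ⟨jw, hjw, hjne⟩ := hcon
    have hex : ∃ j, annPlay τ r j ≠ annPlay τ r' j := ⟨jw, hjne⟩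
    have hne := Nat.find_spec hex
    set j₀ := Nat.find hex with hj₀def
    have hmin : ∀ i < j₀, annPlay τ r i = annPlay τ r' i := by
      intro i hi
      exact not_ne_iff.mp (Nat.find_min hex hi)
    have hj₀le : j₀ ≤ 2 * M := le_trans (Nat.find_le hjne) hjw
    have hj₀pos : j₀ ≠ 0 := by
      intro h
      apply hne
      rw [h]
      rfl
    obtain ⟨a, ha⟩ : ∃ a, j₀ = a + 1 := ⟨j₀ - 1, by omega⟩
    have hodd : j₀ % 2 = 1 := by
      by_contra hodd
      have haodd : ¬ a % 2 = 0 := by omega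
      apply hne
      rw [ha, annPlay_succ, annPlay_succ, if_neg haodd, if_neg haodd, hmin a (by omega)]
    exact back hr hr' hne hmin hodd hj₀le (4 * M) (2 * M) (2 * M) (by omega) le_rfl le_rfl
      (by omega) (by omega) hfin hLfull
  intro k hk
  have h1 := hall (2 * k + 1) (by omega)
  have h2 := getLast?_eraseRep (annPlay τ r (2 * k)) (r k)
  have h3 := getLast?_eraseRep (annPlay τ r' (2 * k)) (r' k)
  rw [annPlay_succ, annPlay_succ, if_pos (by omega : 2 * k % 2 = 0),
    if_pos (by omega : 2 * k % 2 = 0), show 2 * k / 2 = k by omega] at h1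
  have e0 := hall (2 * k) (by omega)
  rw [e0] at h1 h2
  rw [h1, h3] at h2
  exact (Option.some_inj.mp h2).symm
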